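/- Let E be a real normed space and n ≥ 1. Suppose ω : ℝⁿ → E is differentiable everywhere, satisfies (Dω)(x)(x) = 0 for all x ∈ ℝⁿ (i.e. ∑_μ x^μ ∂_μ ω(x) = 0, so ω is constant along every ray from the origin), and ω(x) → 0 as ‖x‖ → ∞. Then ω = 0 identically. -/
import Mathlib

/-- Auxiliary: `ω` is constant on each open ray `{t • x : t > 0}`. -/
lemma ray_const {E : Type*} [NormedAddCommGroup E] [NormedSpace ℝ E]
    {n : ℕ} (ω : (Fin n → ℝ) → E) (hω : Differentiable ℝ ω)
    (hray : ∀ x : Fin n → ℝ, fderiv ℝ ω x x = 0)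
    (x : Fin n → ℝ) {s t : ℝ} (hs : 0 < s) (ht : 0 < t) :
    ω (s • x) = ω (t • x) := by
  have key : ∀ u : ℝ, u ∈ Set.Ioi (0:ℝ) →
      HasDerivAt (fun r : ℝ => ω (r • x)) 0 u := by
    intro u hu
    have h1 : HasDerivAt (fun r : ℝ => r • x) x u := by simpa using (hasDerivAt_id u).smul_const x
    have h2 := ((hω (u • x)).hasFDerivAt.comp_hasDerivAt u h1)
    have h3 : fderiv ℝ ω (u • x) x = 0 := by
      have := hray (u • x)
      rw [(fderiv ℝ ω (u • x)).map_smul] at this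
      rcases smul_eq_zero.1 this with h | h
      · exact absurd h (ne_of_gt hu)
      · exact h
    rwa [h3] at h2
  have hconv : Convex ℝ (Set.Ioi (0:ℝ)) := convex_Ioi 0
  have hopen : IsOpen (Set.Ioi (0:ℝ)) := isOpen_Ioi
  have hdiff : DifferentiableOn ℝ (fun r : ℝ => ω (r • x)) (Set.Ioi 0) :=
    fun u hu => ((key u hu).differentiableAt).differentiableWithinAt
  have hzero : ∀ u ∈ Set.Ioi (0:ℝ),
      fderivWithin ℝ (fun r : ℝ => ω (r • x)) (Set.Ioi 0) u = 0 := by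
    intro u hu
    rw [fderivWithin_of_isOpen hopen hu]
    have := (key u hu).hasFDerivAt.fderiv
    rw [this]
    ext v
    simp
  exact hconv.is_const_of_fderivWithin_eq_zero hdiff hzero hs ht

/-- If `ω : ℝⁿ → E` (E a real normed space, n ≥ 1) is differentiable
everywhere, is annihilated by the radial vector field (`(Dω)(x)(x) = 0` for all `x`),
and tends to `0` as `‖x‖ → ∞`, then `ω = 0`. -/
theorem radial_constant_vanishing_at_infinity_implies_zero
    {E : Type*} [NormedAddCommGroup E] [NormedSpace ℝ E]
    {n : ℕ} (hn : 1 ≤ n)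
    (ω : (Fin n → ℝ) → E) (hω : Differentiable ℝ ω)
    (hray : ∀ x : Fin n → ℝ, fderiv ℝ ω x x = 0)
    (hinf : Filter.Tendsto ω (Filter.comap (fun x => ‖x‖) Filter.atTop) (nhds 0)) :
    ω = 0 := by
  -- First: ω x = 0 for x ≠ 0
  have hne : ∀ x : Fin n → ℝ, x ≠ 0 → ω x = 0 := by
    intro x hx
    have hnx : 0 < ‖x‖ := norm_pos_iff.2 hx
    -- tendsto of t ↦ t • x into the comap filter
    have htend : Filter.Tendsto (fun t : ℝ => t • x) Filter.atTop
        (Filter.comap (fun y => ‖y‖) Filter.atTop) := by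
      rw [Filter.tendsto_comap_iff]
      have : (fun y : Fin n → ℝ => ‖y‖) ∘ (fun t : ℝ => t • x) = fun t => |t| * ‖x‖ := by
        funext t; simp [norm_smul, Real.norm_eq_abs]
      rw [this]
      exact (Filter.tendsto_abs_atTop_atTop).atTop_mul_const hnx
    have h1 : Filter.Tendsto (fun t : ℝ => ω (t • x)) Filter.atTop (nhds 0) :=
      hinf.comp htend
    have h2 : ∀ᶠ t : ℝ in Filter.atTop, ω (t • x) = ω x := by
      filter_upwards [Filter.eventually_gt_atTop 0] with t ht
      have := ray_const ω hω hray x ht one_pos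
      simpa using this
    have h3 : Filter.Tendsto (fun _ : ℝ => ω x) Filter.atTop (nhds 0) :=
      h1.congr' h2
    exact tendsto_nhds_unique tendsto_const_nhds h3
  -- Now x = 0 by continuity
  funext x
  rcases eq_or_ne x 0 with rfl | hx
  · -- use a nonzero direction
    set e : Fin n → ℝ := fun _ => 1 with he
    have hene : e ≠ 0 := by
      intro h
      have := congrFun h ⟨0, hn⟩
      simpa [he] using this
    have hlim : Filter.Tendsto (fun t : ℝ => ω (t • e))
        (nhdsWithin 0 (Set.Ioi 0)) (nhds (ω 0)) := by
      have hc : Continuous fun t : ℝ => ω (t • e) :=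
        hω.continuous.comp (continuous_id.smul continuous_const)
      have := hc.continuousAt (x := (0:ℝ))
      have h0 : (fun t : ℝ => ω (t • e)) 0 = ω 0 := by simp
      have := this.continuousWithinAt (s := Set.Ioi 0)
      simpa [ContinuousWithinAt, h0] using this
    have hconst : Filter.Tendsto (fun t : ℝ => ω (t • e))
        (nhdsWithin 0 (Set.Ioi 0)) (nhds 0) := by
      have : ∀ᶠ t : ℝ in nhdsWithin 0 (Set.Ioi 0), ω (t • e) = 0 := by
        filter_upwards [self_mem_nhdsWithin] with t (ht : (0:ℝ) < t)
        have h1 : ω (t • e) = ω ((1:ℝ) • e) := ray_const ω hω hray e ht one_pos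
        rw [h1, one_smul]
        exact hne e hene
      exact Filter.Tendsto.congr' (this.mono fun t h => h.symm) tendsto_const_nhds
    have : ω 0 = 0 := tendsto_nhds_unique hlim hconst
    simpa using this
  · simpa using hne x hx
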